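/- arXiv:1608.00600 — 4 statements merged into one kernel-verified Lean document; each statement's English description precedes it below -/
import Mathlib

section
/- For every integer n ≥ 3 and every real d > 0, the iterated integral ∫_{x=-∞}^{0} ∫_{y=d}^{∞} log( y(x−d) / (x(y−d)) ) / (y−x)^n dy dx equals 2·H(n−2) / ((n−1)(n−2)·d^{n−2}). -/
open Real MeasureTheory Set Filter Topology

/-- The `m`-th harmonic number `H(m) = ∑_{i=1}^{m} 1/i`, with `H(0) = 0`. -/
noncomputable def H (m : ℕ) : ℝ := ∑ i ∈ Finset.range m, (1 : ℝ) / (i + 1)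

lemma aux_pow_tail (k : ℕ) {c : ℝ} (hc : 0 < c) :
    IntegrableOn (fun t : ℝ => (t ^ (k + 2))⁻¹) (Ioi c) ∧
      ∫ t in Ioi c, (t ^ (k + 2))⁻¹ = (c ^ (k + 1))⁻¹ / ((k : ℝ) + 1) := by
  have hderiv : ∀ t ∈ Ici c,
      HasDerivAt (fun t : ℝ => -(t ^ (k + 1))⁻¹ / ((k : ℝ) + 1)) ((t ^ (k + 2))⁻¹) t := by
    intro t ht
    have ht0 : (0:ℝ) < t := lt_of_lt_of_le hc ht
    have h1 : HasDerivAt (fun t : ℝ => (t ^ (k + 1))⁻¹)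
        (-(((k : ℕ) + 1 : ℕ) * t ^ (k + 1 - 1)) / (t ^ (k + 1)) ^ 2) t :=
      (hasDerivAt_pow (k + 1) t).inv (pow_ne_zero _ ht0.ne')
    have h2 := (h1.neg).div_const ((k : ℝ) + 1)
    refine h2.congr_deriv ?_
    symm
    have hk : (k : ℝ) + 1 ≠ 0 := by positivity
    simp only [Nat.add_sub_cancel]
    push_cast
    field_simp
    ring
  have hpos : ∀ t ∈ Ioi c, 0 ≤ (t ^ (k + 2))⁻¹ := by
    intro t ht
    have : (0:ℝ) < t := hc.trans ht
    positivity
  have htop : Tendsto (fun t : ℝ => -(t ^ (k + 1))⁻¹ / ((k : ℝ) + 1)) atTop (𝓝 0) := by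
    have h0 : Tendsto (fun t : ℝ => (t ^ (k + 1))⁻¹) atTop (𝓝 0) :=
      (tendsto_pow_atTop (Nat.succ_ne_zero k)).inv_tendsto_atTop
    have := (h0.neg).div_const ((k : ℝ) + 1)
    simpa using this
  refine ⟨integrableOn_Ioi_deriv_of_nonneg' hderiv hpos htop, ?_⟩
  rw [integral_Ioi_of_hasDerivAt_of_nonneg' hderiv hpos htop]
  ring

lemma aux_pow_Ioi (k : ℕ) {x c : ℝ} (h : x < c) :
    IntegrableOn (fun y : ℝ => ((y - x) ^ (k + 2))⁻¹) (Ioi c) ∧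
      ∫ y in Ioi c, ((y - x) ^ (k + 2))⁻¹ = ((c - x) ^ (k + 1))⁻¹ / ((k : ℝ) + 1) := by
  have hmp : MeasurePreserving (fun y : ℝ => y - x) volume volume :=
    measurePreserving_sub_right volume x
  have hemb : MeasurableEmbedding (fun y : ℝ => y - x) :=
    (MeasurableEquiv.subRight x).measurableEmbedding
  have hpre : (fun y : ℝ => y - x) ⁻¹' (Ioi (c - x)) = Ioi c := by
    ext y; simp [sub_lt_sub_iff_right]
  have base := aux_pow_tail k (c := c - x) (by linarith)
  constructor
  · have := (hmp.integrableOn_comp_preimage hemb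
      (f := fun t : ℝ => (t ^ (k + 2))⁻¹) (s := Ioi (c - x))).mpr base.1
    rw [hpre] at this
    simpa [Function.comp_def] using this
  · have := hmp.setIntegral_preimage_emb hemb (fun t : ℝ => (t ^ (k + 2))⁻¹) (Ioi (c - x))
    rw [hpre] at this
    rw [this, base.2]

lemma aux_pow_Iio (k : ℕ) {y : ℝ} (hy : 0 < y) :
    IntegrableOn (fun x : ℝ => ((y - x) ^ (k + 2))⁻¹) (Iio 0) ∧
      ∫ x in Iio 0, ((y - x) ^ (k + 2))⁻¹ = (y ^ (k + 1))⁻¹ / ((k : ℝ) + 1) := by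
  have hmp : MeasurePreserving (fun x : ℝ => y - x) volume volume :=
    Measure.measurePreserving_sub_left volume y
  have hemb : MeasurableEmbedding (fun x : ℝ => y - x) :=
    (MeasurableEquiv.subLeft y).measurableEmbedding
  have hpre : (fun x : ℝ => y - x) ⁻¹' (Ioi y) = Iio 0 := by
    ext x
    simp only [mem_preimage, mem_Ioi, mem_Iio]
    constructor <;> intro hx <;> linarith
  have base := aux_pow_tail k (c := y) hy
  constructor
  · have := (hmp.integrableOn_comp_preimage hemb
      (f := fun t : ℝ => (t ^ (k + 2))⁻¹) (s := Ioi y)).mpr base.1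
    rw [hpre] at this
    simpa [Function.comp_def] using this
  · have := hmp.setIntegral_preimage_emb hemb (fun t : ℝ => (t ^ (k + 2))⁻¹) (Ioi y)
    rw [hpre] at this
    rw [this, base.2]

lemma aux_geo (l : ℕ) (d y : ℝ) :
    (∑ i ∈ Finset.range (l + 1), y ^ i * d ^ (l - i)) * (y - d) = y ^ (l + 1) - d ^ (l + 1) := by
  have := geom_sum₂_mul y d (l + 1)
  simpa [Nat.add_sub_cancel] using this

lemma aux_geo' (l : ℕ) (d y : ℝ) :
    (∑ j ∈ Finset.range (l + 1), d ^ (j + 1) * y ^ (l - j)) * (y - d)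
      = d * (y ^ (l + 1) - d ^ (l + 1)) := by
  have h1 : ∑ j ∈ Finset.range (l + 1), d ^ (j + 1) * y ^ (l - j)
      = d * ∑ j ∈ Finset.range (l + 1), y ^ (l - j) * d ^ j := by
    rw [Finset.mul_sum]
    refine Finset.sum_congr rfl fun j hj => by ring
  have h2 : ∑ j ∈ Finset.range (l + 1), y ^ (l - j) * d ^ j
      = ∑ i ∈ Finset.range (l + 1), y ^ i * d ^ (l - i) := by
    rw [← Finset.sum_range_reflect (fun i => y ^ i * d ^ (l - i)) (l + 1)]
    refine Finset.sum_congr rfl fun j hj => ?_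
    have hj' : j ≤ l := Nat.lt_succ_iff.mp (Finset.mem_range.mp hj)
    rw [show l + 1 - 1 - j = l - j from by omega, show l - (l - j) = j from by omega]
  rw [h1, h2, mul_assoc, aux_geo]

set_option maxHeartbeats 2000000 in
lemma aux_log_int (l : ℕ) {d : ℝ} (hd : 0 < d) :
    IntegrableOn (fun y : ℝ => Real.log (y / (y - d)) * (y ^ (l + 2))⁻¹) (Ioi d) ∧
      ∫ y in Ioi d, Real.log (y / (y - d)) * (y ^ (l + 2))⁻¹
        = H (l + 1) / (((l : ℝ) + 1) * d ^ (l + 1)) := by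
  set C : ℝ := ((l : ℝ) + 1) * d ^ (l + 1) with hC
  set A : ℝ → ℝ := fun y => 1 - d ^ (l + 1) * (y ^ (l + 1))⁻¹ with hA
  set S : ℝ → ℝ := fun y => ∑ j ∈ Finset.range (l + 1),
    d ^ (j + 1) * (y ^ (j + 1))⁻¹ / ((j : ℝ) + 1) with hS
  set Φ : ℝ → ℝ := fun y => (A y * (Real.log y - Real.log (y - d)) - S y) / C with hΦ
  have hC0 : C ≠ 0 := by positivity
  -- derivative
  have hderiv : ∀ y ∈ Ioi d, HasDerivAt Φ (Real.log (y / (y - d)) * (y ^ (l + 2))⁻¹) y := by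
    intro y hy
    rw [mem_Ioi] at hy
    have hy0 : (0 : ℝ) < y := hd.trans hy
    have hyd : (0 : ℝ) < y - d := sub_pos.mpr hy
    have hdA : HasDerivAt A
        (-(d ^ (l + 1) * (-(((l : ℕ) + 1 : ℕ) * y ^ (l + 1 - 1)) / (y ^ (l + 1)) ^ 2))) y :=
      (((hasDerivAt_pow (l + 1) y).inv (pow_ne_zero _ hy0.ne')).const_mul _).const_sub 1
    have hdL : HasDerivAt (fun y : ℝ => Real.log y - Real.log (y - d))
        (y⁻¹ - 1 / (y - d)) y :=
      (Real.hasDerivAt_log hy0.ne').sub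
        (((hasDerivAt_id y).sub_const d).log (by simpa using hyd.ne'))
    have hdS : HasDerivAt S
        (∑ j ∈ Finset.range (l + 1),
          d ^ (j + 1) * (-(((j : ℕ) + 1 : ℕ) * y ^ (j + 1 - 1)) / (y ^ (j + 1)) ^ 2) / ((j : ℝ) + 1)) y :=
      HasDerivAt.fun_sum fun j _ =>
        (((hasDerivAt_pow (j + 1) y).inv (pow_ne_zero _ hy0.ne')).const_mul _).div_const _
    have hfull := ((hdA.mul hdL).sub hdS).div_const C
    refine hfull.congr_deriv ?_
    symm
    rw [Real.log_div hy0.ne' hyd.ne']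
    have hsum : (∑ j ∈ Finset.range (l + 1),
          d ^ (j + 1) * (-(((j : ℕ) + 1 : ℕ) * y ^ (j + 1 - 1)) / (y ^ (j + 1)) ^ 2) / ((j : ℝ) + 1))
        = -((∑ j ∈ Finset.range (l + 1), d ^ (j + 1) * y ^ (l - j)) / y ^ (l + 2)) := by
      rw [Finset.sum_div, ← Finset.sum_neg_distrib]
      refine Finset.sum_congr rfl fun j hj => ?_
      have hj' : j ≤ l := Nat.lt_succ_iff.mp (Finset.mem_range.mp hj)
      have hy2 : y ^ (l + 2) = y ^ (j + 2) * y ^ (l - j) := by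
        rw [← pow_add]; congr 1; omega
      rw [show j + 1 - 1 = j from by omega, hy2]
      have hj1 : ((j : ℝ) + 1) ≠ 0 := by positivity
      field_simp
      push_cast
      ring
    have hgeo : (∑ j ∈ Finset.range (l + 1), d ^ (j + 1) * y ^ (l - j))
        = d * (y ^ (l + 1) - d ^ (l + 1)) / (y - d) := by
      rw [eq_div_iff hyd.ne']
      exact aux_geo' l d y
    rw [hsum, hgeo, show l + 1 - 1 = l from by omega, hC]
    simp only [hA]
    push_cast
    field_simp
    ring
  -- nonnegativity
  have hpos : ∀ y ∈ Ioi d, 0 ≤ Real.log (y / (y - d)) * (y ^ (l + 2))⁻¹ := by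
    intro y hy
    rw [mem_Ioi] at hy
    have hy0 : (0 : ℝ) < y := hd.trans hy
    have hyd : (0 : ℝ) < y - d := sub_pos.mpr hy
    have h1 : (1 : ℝ) ≤ y / (y - d) := (one_le_div hyd).mpr (by linarith)
    have := Real.log_nonneg h1
    positivity
  -- limit at infinity
  have hAtop : Tendsto A atTop (𝓝 1) := by
    have h0 : Tendsto (fun y : ℝ => (y ^ (l + 1))⁻¹) atTop (𝓝 0) :=
      (tendsto_pow_atTop (Nat.succ_ne_zero l)).inv_tendsto_atTop
    have h1 := (tendsto_const_nhds (x := (1 : ℝ))).sub (h0.const_mul (d ^ (l + 1)))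
    rw [hA]
    simpa using h1
  have hLtop : Tendsto (fun y : ℝ => Real.log y - Real.log (y - d)) atTop (𝓝 0) := by
    have h1 : Tendsto (fun y : ℝ => 1 - d * y⁻¹) atTop (𝓝 1) := by
      have h0 := tendsto_inv_atTop_zero (𝕜 := ℝ)
      have := (tendsto_const_nhds (x := (1 : ℝ))).sub (h0.const_mul d)
      simpa using this
    have h2 : Tendsto (fun y : ℝ => Real.log (1 - d * y⁻¹)) atTop (𝓝 0) := by
      have := (Real.continuousAt_log one_ne_zero).tendsto.comp h1
      simpa [Function.comp_def] using this
    have h3 := h2.neg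
    rw [neg_zero] at h3
    apply h3.congr'
    filter_upwards [eventually_gt_atTop d, eventually_gt_atTop 0] with y hy hy0
    have hyd : (0 : ℝ) < y - d := sub_pos.mpr hy
    have he : 1 - d * y⁻¹ = (y - d) / y := by field_simp
    rw [he, Real.log_div hyd.ne' hy0.ne']
    ring
  have hStop : Tendsto S atTop (𝓝 0) := by
    rw [hS]
    have h0 : Tendsto (fun y : ℝ => ∑ j ∈ Finset.range (l + 1),
        d ^ (j + 1) * (y ^ (j + 1))⁻¹ / ((j : ℝ) + 1)) atTop
        (𝓝 (∑ j ∈ Finset.range (l + 1), (0 : ℝ))) := by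
      apply tendsto_finset_sum
      intro j _
      have hj0 : Tendsto (fun y : ℝ => (y ^ (j + 1))⁻¹) atTop (𝓝 0) :=
        (tendsto_pow_atTop (Nat.succ_ne_zero j)).inv_tendsto_atTop
      have := (hj0.const_mul (d ^ (j + 1))).div_const ((j : ℝ) + 1)
      simpa using this
    simpa using h0
  have htop : Tendsto Φ atTop (𝓝 0) := by
    have h1 := ((hAtop.mul hLtop).sub hStop).div_const C
    rw [show ((1 : ℝ) * 0 - 0) / C = 0 from by simp] at h1
    rw [hΦ]
    exact h1
  -- continuity at d from the right
  have hSc : ContinuousAt S d := by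
    have : HasDerivAt S (∑ j ∈ Finset.range (l + 1),
        d ^ (j + 1) * (-(((j : ℕ) + 1 : ℕ) * d ^ (j + 1 - 1)) / (d ^ (j + 1)) ^ 2) / ((j : ℝ) + 1)) d :=
      HasDerivAt.fun_sum fun j _ =>
        (((hasDerivAt_pow (j + 1) d).inv (pow_ne_zero _ hd.ne')).const_mul _).div_const _
    exact this.continuousAt
  set P : ℝ → ℝ := fun y => (∑ i ∈ Finset.range (l + 1), y ^ i * d ^ (l - i)) * (y ^ (l + 1))⁻¹
    with hP
  have hPc : ContinuousAt P d := by
    apply ContinuousAt.mul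
    · exact (continuous_finset_sum _ fun i _ =>
        (continuous_pow i).mul continuous_const).continuousAt
    · exact ((continuous_pow (l + 1)).continuousAt).inv₀ (pow_ne_zero _ hd.ne')
  have hAd : A d = 0 := by
    rw [hA]
    simp [mul_inv_cancel₀ (pow_ne_zero _ hd.ne')]
  have hcont : ContinuousWithinAt Φ (Ici d) d := by
    rw [← continuousWithinAt_diff_self, Ici_sdiff_left]
    have hsub : Tendsto (fun y : ℝ => y - d) (𝓝[>] d) (𝓝[>] (0 : ℝ)) := by
      rw [tendsto_nhdsWithin_iff]
      constructor
      · have h0 : Tendsto (fun y : ℝ => y - d) (𝓝 d) (𝓝 (d - d)) :=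
          (continuous_sub_right d).tendsto d
        rw [sub_self] at h0
        exact h0.mono_left nhdsWithin_le_nhds
      · filter_upwards [self_mem_nhdsWithin] with y hy
        exact sub_pos.mpr (show d < y from hy)
    have hxlogx : Tendsto (fun y : ℝ => (y - d) * Real.log (y - d)) (𝓝[>] d) (𝓝 0) := by
      have h0 := (tendsto_log_mul_rpow_nhdsGT_zero zero_lt_one).comp hsub
      simp only [Function.comp_def, rpow_one] at h0
      apply h0.congr
      intro y
      ring
    have hlog : Tendsto (fun y : ℝ => (y - d) * Real.log y) (𝓝[>] d) (𝓝 0) := by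
      have hcy : ContinuousAt (fun y : ℝ => (y - d) * Real.log y) d :=
        ((continuous_id.sub continuous_const).continuousAt).mul (Real.continuousAt_log hd.ne')
      have h0 := (hcy.continuousWithinAt (s := Ioi d)).tendsto
      simpa using h0
    have hPw : Tendsto P (𝓝[>] d) (𝓝 (P d)) := (hPc.continuousWithinAt (s := Ioi d)).tendsto
    have hT : Tendsto (fun y => A y * (Real.log y - Real.log (y - d))) (𝓝[>] d) (𝓝 0) := by
      have hcomb := (hPw.mul hlog).sub (hPw.mul hxlogx)
      rw [show P d * 0 - P d * 0 = 0 from by ring] at hcomb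
      apply hcomb.congr'
      filter_upwards [self_mem_nhdsWithin] with y hy
      have hy0 : (0 : ℝ) < y := hd.trans hy
      have hyd : (0 : ℝ) < y - d := sub_pos.mpr hy
      have hAy : A y = P y * (y - d) := by
        rw [hA, hP]
        simp only
        have hgeo := aux_geo l d y
        field_simp
        linear_combination (-1 : ℝ) * hgeo
      rw [hAy]
      ring
    show Tendsto Φ (𝓝[Ioi d] d) (𝓝 (Φ d))
    have hΦd : Φ d = (0 - S d) / C := by
      simp only [hΦ, hAd, zero_mul]
    rw [hΦd]
    have := (hT.sub ((hSc.continuousWithinAt (s := Ioi d)).tendsto)).div_const C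
    rw [hΦ]
    exact this
  -- conclude
  have hSd : S d = H (l + 1) := by
    simp only [hS, H]
    refine Finset.sum_congr rfl fun j _ => ?_
    rw [mul_inv_cancel₀ (pow_ne_zero _ hd.ne')]
  refine ⟨integrableOn_Ioi_deriv_of_nonneg hcont hderiv hpos htop, ?_⟩
  rw [integral_Ioi_of_hasDerivAt_of_nonneg hcont hderiv hpos htop]
  simp only [hΦ, hAd, hSd, zero_mul, hC]
  ring

set_option maxHeartbeats 2000000 in
/-- For every integer `n ≥ 3` and real `d > 0`,
`∫_{x=-∞}^{0} ∫_{y=d}^{∞} log(y(x−d)/(x(y−d))) / (y−x)^n dy dx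
  = 2·H(n−2) / ((n−1)(n−2)·d^{n−2})`. -/
theorem iterated_integral_log_cross_ratio (n : ℕ) (hn : 3 ≤ n) (d : ℝ) (hd : 0 < d) :
    (∫ x in Set.Iio (0 : ℝ), ∫ y in Set.Ioi d,
        Real.log (y * (x - d) / (x * (y - d))) / (y - x) ^ n) =
      2 * H (n - 2) / (((n : ℝ) - 1) * ((n : ℝ) - 2) * d ^ (n - 2)) := by
  obtain ⟨l, rfl⟩ : ∃ l, n = l + 3 := ⟨n - 3, by omega⟩
  have hkey := aux_log_int l hd
  set V : ℝ := H (l + 1) / (((l : ℝ) + 1) * d ^ (l + 1)) / ((l : ℝ) + 2) with hV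
  -- measurability
  have hmeas1 : ∀ x : ℝ, Measurable (fun y : ℝ => Real.log (y / (y - d)) / (y - x) ^ (l + 3)) := by
    intro x
    exact ((Real.measurable_log.comp
        (measurable_id.mul ((measurable_id.sub_const d).inv))).div
      ((measurable_id.sub_const x).pow_const _))
  have hmeas2 : Measurable (fun p : ℝ × ℝ => Real.log (p.2 / (p.2 - d)) / (p.2 - p.1) ^ (l + 3)) := by
    exact ((Real.measurable_log.comp
        (measurable_snd.mul ((measurable_snd.sub_const d).inv))).div
      ((measurable_snd.sub measurable_fst).pow_const _))
  -- integrability of the first piece in y, for each x < 0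
  have h1 : ∀ x ∈ Iio (0:ℝ),
      IntegrableOn (fun y : ℝ => Real.log (y / (y - d)) / (y - x) ^ (l + 3)) (Ioi d) := by
    intro x hx
    rw [mem_Iio] at hx
    apply Integrable.mono' (hkey.1.mul_const d⁻¹) ((hmeas1 x).aestronglyMeasurable)
    filter_upwards [ae_restrict_mem measurableSet_Ioi] with y hy
    rw [mem_Ioi] at hy
    have hy0 : (0:ℝ) < y := hd.trans hy
    have hyd : (0:ℝ) < y - d := sub_pos.mpr hy
    have hyx : (0:ℝ) < y - x := by linarith
    have hlognn : 0 ≤ Real.log (y / (y - d)) :=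
      Real.log_nonneg ((one_le_div hyd).mpr (by linarith))
    rw [Real.norm_eq_abs, abs_of_nonneg (div_nonneg hlognn (by positivity))]
    have hrhs : Real.log (y / (y - d)) * (y ^ (l + 2))⁻¹ * d⁻¹
        = Real.log (y / (y - d)) / (y ^ (l + 2) * d) := by
      field_simp
    rw [hrhs]
    apply div_le_div_of_nonneg_left hlognn (by positivity)
    calc y ^ (l + 2) * d ≤ y ^ (l + 2) * y := by
          apply mul_le_mul_of_nonneg_left (by linarith) (by positivity)
      _ = y ^ (l + 3) := by ring
      _ ≤ (y - x) ^ (l + 3) := pow_le_pow_left₀ hy0.le (by linarith) _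
  -- inner integral decomposition
  have hinner : ∀ x ∈ Iio (0:ℝ),
      (∫ y in Ioi d, Real.log (y * (x - d) / (x * (y - d))) / (y - x) ^ (l + 3))
        = (∫ y in Ioi d, Real.log (y / (y - d)) / (y - x) ^ (l + 3))
          + Real.log ((d - x) / (-x)) * ((d - x) ^ (l + 2))⁻¹ / ((l : ℝ) + 2) := by
    intro x hx
    rw [mem_Iio] at hx
    have hxd : x < d := hx.trans hd
    have h2 : IntegrableOn
        (fun y : ℝ => Real.log ((d - x) / (-x)) * ((y - x) ^ (l + 1 + 2))⁻¹) (Ioi d) :=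
      (aux_pow_Ioi (l + 1) hxd).1.const_mul _
    have hcongr : EqOn
        (fun y : ℝ => Real.log (y * (x - d) / (x * (y - d))) / (y - x) ^ (l + 3))
        (fun y : ℝ => Real.log (y / (y - d)) / (y - x) ^ (l + 3)
          + Real.log ((d - x) / (-x)) * ((y - x) ^ (l + 1 + 2))⁻¹) (Ioi d) := by
      intro y hy
      rw [mem_Ioi] at hy
      have hy0 : (0:ℝ) < y := hd.trans hy
      have hyd : (0:ℝ) < y - d := sub_pos.mpr hy
      have hyx : (0:ℝ) < y - x := by linarith
      have hx0 : x ≠ 0 := ne_of_lt hx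
      have harg : y * (x - d) / (x * (y - d)) = (y / (y - d)) * ((d - x) / (-x)) := by
        rw [div_mul_div_comm, div_eq_div_iff (mul_ne_zero hx0 hyd.ne')
          (mul_ne_zero hyd.ne' (neg_ne_zero.mpr hx0))]
        ring
      simp only
      rw [harg, Real.log_mul (div_pos hy0 hyd).ne' (div_pos (by linarith) (by linarith)).ne']
      ring
    rw [setIntegral_congr_fun measurableSet_Ioi hcongr,
      integral_add (h1 x hx) h2, integral_const_mul, (aux_pow_Ioi (l + 1) hxd).2]
    push_cast
    ring
  -- Fubini part
  have hFmeas : AEStronglyMeasurable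
      (fun p : ℝ × ℝ => Real.log (p.2 / (p.2 - d)) / (p.2 - p.1) ^ (l + 3))
      ((volume.restrict (Iio 0)).prod (volume.restrict (Ioi d))) :=
    hmeas2.aestronglyMeasurable
  have hFint : Integrable
      (fun p : ℝ × ℝ => Real.log (p.2 / (p.2 - d)) / (p.2 - p.1) ^ (l + 3))
      ((volume.restrict (Iio 0)).prod (volume.restrict (Ioi d))) := by
    rw [integrable_prod_iff' hFmeas]
    constructor
    · filter_upwards [ae_restrict_mem measurableSet_Ioi] with y hy
      rw [mem_Ioi] at hy
      have hy0 : (0:ℝ) < y := hd.trans hy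
      have h0 := (aux_pow_Iio (l + 1) hy0).1.const_mul (Real.log (y / (y - d)))
      refine h0.congr (Filter.Eventually.of_forall fun x => ?_)
      rw [show l + 1 + 2 = l + 3 from by omega]
      exact (div_eq_mul_inv _ _).symm
    · apply Integrable.congr (hkey.1.div_const ((l:ℝ) + 2))
      filter_upwards [ae_restrict_mem measurableSet_Ioi] with y hy
      rw [mem_Ioi] at hy
      have hy0 : (0:ℝ) < y := hd.trans hy
      have hyd : (0:ℝ) < y - d := sub_pos.mpr hy
      have hlognn : 0 ≤ Real.log (y / (y - d)) :=
        Real.log_nonneg ((one_le_div hyd).mpr (by linarith))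
      have hre : EqOn (fun x : ℝ => ‖Real.log (y / (y - d)) / (y - x) ^ (l + 3)‖)
          (fun x : ℝ => Real.log (y / (y - d)) * ((y - x) ^ (l + 1 + 2))⁻¹) (Iio 0) := by
        intro x hx
        rw [mem_Iio] at hx
        have hyx : (0:ℝ) < y - x := by linarith
        simp only
        rw [Real.norm_eq_abs, abs_of_nonneg (div_nonneg hlognn (by positivity)),
          show l + 1 + 2 = l + 3 from by omega]
        exact div_eq_mul_inv _ _
      rw [setIntegral_congr_fun measurableSet_Iio hre, integral_const_mul,
        (aux_pow_Iio (l + 1) hy0).2]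
      push_cast
      ring
  have hswap := integral_integral_swap
    (f := fun x y => Real.log (y / (y - d)) / (y - x) ^ (l + 3))
    (μ := volume.restrict (Iio 0)) (ν := volume.restrict (Ioi d)) hFint
  have hKint : Integrable
      (fun x => ∫ y in Ioi d, Real.log (y / (y - d)) / (y - x) ^ (l + 3))
      (volume.restrict (Iio 0)) := hFint.integral_prod_left
  have hT1 : (∫ x in Iio (0:ℝ), ∫ y in Ioi d, Real.log (y / (y - d)) / (y - x) ^ (l + 3)) = V := by
    rw [hswap]
    have hout : EqOn
        (fun y : ℝ => ∫ x in Iio (0:ℝ), Real.log (y / (y - d)) / (y - x) ^ (l + 3))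
        (fun y : ℝ => Real.log (y / (y - d)) * (y ^ (l + 2))⁻¹ / ((l:ℝ) + 2)) (Ioi d) := by
      intro y hy
      rw [mem_Ioi] at hy
      have hy0 : (0:ℝ) < y := hd.trans hy
      have hptw : EqOn (fun x : ℝ => Real.log (y / (y - d)) / (y - x) ^ (l + 3))
          (fun x : ℝ => Real.log (y / (y - d)) * ((y - x) ^ (l + 1 + 2))⁻¹) (Iio 0) := by
        intro x hx
        simp only
        rw [show l + 1 + 2 = l + 3 from by omega]
        exact div_eq_mul_inv _ _
      simp only
      rw [setIntegral_congr_fun measurableSet_Iio hptw, integral_const_mul,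
        (aux_pow_Iio (l + 1) hy0).2]
      push_cast
      ring
    rw [setIntegral_congr_fun measurableSet_Ioi hout, integral_div, hkey.2, hV]
  -- reflection part
  have hmp : MeasurePreserving (fun x : ℝ => d - x) volume volume :=
    Measure.measurePreserving_sub_left volume d
  have hemb : MeasurableEmbedding (fun x : ℝ => d - x) :=
    (MeasurableEquiv.subLeft d).measurableEmbedding
  have hpre : (fun x : ℝ => d - x) ⁻¹' (Ioi d) = Iio 0 := by
    ext x
    simp only [mem_preimage, mem_Ioi, mem_Iio]
    constructor <;> intro h <;> linarith
  have hBint : IntegrableOn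
      (fun x : ℝ => Real.log ((d - x) / (-x)) * ((d - x) ^ (l + 2))⁻¹ / ((l:ℝ) + 2)) (Iio 0) := by
    have h0 := (hmp.integrableOn_comp_preimage hemb
      (f := fun t : ℝ => Real.log (t / (t - d)) * (t ^ (l + 2))⁻¹ / ((l:ℝ) + 2))
      (s := Ioi d)).mpr (hkey.1.div_const _)
    rw [hpre] at h0
    exact h0.congr (Filter.Eventually.of_forall fun x => by
      simp [Function.comp, sub_sub_cancel_left])
  have hBval : (∫ x in Iio (0:ℝ),
      Real.log ((d - x) / (-x)) * ((d - x) ^ (l + 2))⁻¹ / ((l:ℝ) + 2)) = V := by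
    have h0 := hmp.setIntegral_preimage_emb hemb
      (fun t : ℝ => Real.log (t / (t - d)) * (t ^ (l + 2))⁻¹ / ((l:ℝ) + 2)) (Ioi d)
    rw [hpre] at h0
    have h1 : (∫ x in Iio (0:ℝ),
        Real.log ((d - x) / (-x)) * ((d - x) ^ (l + 2))⁻¹ / ((l:ℝ) + 2))
        = ∫ x in Iio (0:ℝ),
          Real.log ((d - x) / (d - x - d)) * ((d - x) ^ (l + 2))⁻¹ / ((l:ℝ) + 2) := by
      apply setIntegral_congr_fun measurableSet_Iio
      intro x hx
      simp only [sub_sub_cancel_left]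
    rw [h1, h0, integral_div, hkey.2, hV]
  -- assembly
  have hfin : EqOn
      (fun x : ℝ => ∫ y in Ioi d, Real.log (y * (x - d) / (x * (y - d))) / (y - x) ^ (l + 3))
      (fun x : ℝ => (∫ y in Ioi d, Real.log (y / (y - d)) / (y - x) ^ (l + 3))
        + Real.log ((d - x) / (-x)) * ((d - x) ^ (l + 2))⁻¹ / ((l:ℝ) + 2)) (Iio 0) :=
    fun x hx => hinner x hx
  rw [setIntegral_congr_fun measurableSet_Iio hfin, integral_add hKint hBint, hT1, hBval, hV,
    show l + 3 - 2 = l + 1 from by omega]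
  have hc1 : ((l + 3 : ℕ) : ℝ) - 1 = (l : ℝ) + 2 := by push_cast; ring
  have hc2 : ((l + 3 : ℕ) : ℝ) - 2 = (l : ℝ) + 1 := by push_cast; ring
  rw [hc1, hc2, div_div]
  have hn1 : ((l:ℝ) + 1) ≠ 0 := by positivity
  have hn2 : ((l:ℝ) + 2) ≠ 0 := by positivity
  have hn3 : d ^ (l + 1) ≠ 0 := pow_ne_zero _ hd.ne'
  field_simp
  ring
end

section
/- For every integer n ≥ 3 and every real d > 0, the iterated integral ∫_{x=-∞}^{0} ∫_{y=d}^{∞} log(d−x) / (y−x)^n dy dx equals ((n−2)·log(d) + 1) / ((n−1)(n−2)²·d^{n−2}). -/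
open Real MeasureTheory Set Filter Topology

lemma my_shift (f : ℝ → ℝ) (c a : ℝ) :
    ∫ y in Ioi c, f (y + a) = ∫ y in Ioi (c + a), f y := by
  have A : MeasurableEmbedding (fun y : ℝ => y + a) :=
    (Homeomorph.addRight a).measurableEmbedding
  have h := A.setIntegral_map (μ := volume) f (Ioi (c + a))
  rw [map_add_right_eq_self volume a] at h
  rw [h]
  congr 1
  ext y
  simp [add_lt_add_iff_right]

lemma log_mul_rpow_integrableOn {r : ℝ} (hr : r ≤ -2) {c : ℝ} (hc : 0 < c) :
    IntegrableOn (fun t : ℝ => Real.log t * t ^ r) (Ioi c) := by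
  have h1 : IntegrableOn
      (fun t : ℝ => |Real.log c| * t ^ r + 2 * t ^ (r + 1/2)) (Ioi c) :=
    ((integrableOn_Ioi_rpow_of_lt (by linarith) hc).const_mul _).add
      ((integrableOn_Ioi_rpow_of_lt (by linarith) hc).const_mul _)
  refine Integrable.mono' h1 ?_ ?_
  · refine (ContinuousOn.mul ?_ ?_).aestronglyMeasurable measurableSet_Ioi
    · exact fun t ht => (Real.continuousAt_log (hc.trans ht).ne').continuousWithinAt
    · exact fun t ht =>
        (Real.continuousAt_rpow_const t r (Or.inl (hc.trans ht).ne')).continuousWithinAt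
  · filter_upwards [ae_restrict_mem measurableSet_Ioi] with t ht
    have ht0 : 0 < t := hc.trans ht
    have htr : (0:ℝ) ≤ t ^ r := Real.rpow_nonneg ht0.le r
    have h2 : |Real.log t| ≤ |Real.log c| + 2 * t ^ (1/2 : ℝ) := by
      rcases le_or_gt (Real.log t) 0 with h | h
      · rw [abs_of_nonpos h]
        have hle : Real.log c ≤ Real.log t := Real.log_le_log hc (le_of_lt ht)
        have h4 : (0:ℝ) ≤ t ^ (1/2 : ℝ) := Real.rpow_nonneg ht0.le _
        nlinarith [neg_abs_le (Real.log c)]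
      · rw [abs_of_pos h]
        have h3 := Real.log_le_rpow_div ht0.le (by norm_num : (0:ℝ) < 1/2)
        have h4 : (0:ℝ) ≤ |Real.log c| := abs_nonneg _
        nlinarith
    have hsplit : t ^ (1/2 : ℝ) * t ^ r = t ^ (r + 1/2) := by
      rw [← Real.rpow_add ht0]; ring_nf
    calc ‖Real.log t * t ^ r‖ = |Real.log t| * t ^ r := by
          rw [norm_mul, Real.norm_eq_abs, Real.norm_eq_abs, abs_of_nonneg htr]
      _ ≤ (|Real.log c| + 2 * t ^ (1/2 : ℝ)) * t ^ r :=
          mul_le_mul_of_nonneg_right h2 htr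
      _ = |Real.log c| * t ^ r + 2 * t ^ (r + 1/2) := by rw [← hsplit]; ring

lemma integral_Ioi_log_mul_rpow {r : ℝ} (hr : r ≤ -2) {c : ℝ} (hc : 0 < c) :
    ∫ t in Ioi c, Real.log t * t ^ r
      = c ^ (r + 1) * (1 - (r + 1) * Real.log c) / (r + 1) ^ 2 := by
  have hsneg : r + 1 < 0 := by linarith
  have hs0 : r + 1 ≠ 0 := hsneg.ne
  have hd : ∀ x ∈ Ici c,
      HasDerivAt (fun t => t ^ (r+1) * (Real.log t / (r+1) - 1 / (r+1) ^ 2))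
        (Real.log x * x ^ r) x := by
    intro x hx
    have hx0 : 0 < x := lt_of_lt_of_le hc hx
    have h1 : HasDerivAt (fun t : ℝ => t ^ (r+1)) ((r+1) * x ^ (r+1-1)) x :=
      Real.hasDerivAt_rpow_const (Or.inl hx0.ne')
    have h2 : HasDerivAt (fun t : ℝ => Real.log t / (r+1) - 1 / (r+1) ^ 2)
        (x⁻¹ / (r+1)) x :=
      ((Real.hasDerivAt_log hx0.ne').div_const (r+1)).sub_const _
    have key := h1.mul h2
    refine key.congr_deriv ?_
    have e1 : x ^ (r + 1 - 1) = x ^ r := by norm_num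
    have e2 : x ^ (r+1) * (x⁻¹ / (r+1)) = x ^ r / (r+1) := by
      rw [← Real.rpow_neg_one x, ← mul_div_assoc, ← Real.rpow_add hx0]
      norm_num
    rw [e1, e2]
    field_simp
    ring
  have htend : Tendsto (fun t => t ^ (r+1) * (Real.log t / (r+1) - 1 / (r+1) ^ 2))
      atTop (𝓝 0) := by
    have h1 : Tendsto (fun t : ℝ => Real.log t * t ^ (r+1)) atTop (𝓝 0) := by
      have h := (isLittleO_log_rpow_atTop (show (0:ℝ) < -(r+1) by linarith)).tendsto_div_nhds_zero
      refine h.congr' ?_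
      filter_upwards [eventually_gt_atTop (0:ℝ)] with t ht
      rw [Real.rpow_neg ht.le, div_eq_mul_inv, inv_inv]
    have h2 : Tendsto (fun t : ℝ => t ^ (r+1)) atTop (𝓝 (0:ℝ)) := by
      have := tendsto_rpow_neg_atTop (show (0:ℝ) < -(r+1) by linarith)
      simpa using this
    have h3 := (h1.div_const (r+1)).sub (h2.div_const ((r+1) ^ 2))
    simp only [zero_div, sub_zero] at h3
    refine h3.congr fun t => by ring
  rw [integral_Ioi_of_hasDerivAt_of_tendsto' hd (log_mul_rpow_integrableOn hr hc) htend]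
  field_simp
  ring

/-- For every integer `n ≥ 3` and real `d > 0`,
`∫_{x=-∞}^{0} ∫_{y=d}^{∞} log(d−x) / (y−x)^n dy dx
  = ((n−2)·log d + 1) / ((n−1)(n−2)²·d^{n−2})`. -/
theorem iterated_integral_log_d_sub_x (n : ℕ) (hn : 3 ≤ n) (d : ℝ) (hd : 0 < d) :
    (∫ x in Set.Iio (0 : ℝ), ∫ y in Set.Ioi d, Real.log (d - x) / (y - x) ^ n) =
      (((n : ℝ) - 2) * Real.log d + 1) /
        (((n : ℝ) - 1) * ((n : ℝ) - 2) ^ 2 * d ^ (n - 2)) := by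
  have hn3 : (3:ℝ) ≤ (n:ℝ) := by exact_mod_cast hn
  have h1 : (n:ℝ) - 1 ≠ 0 := by linarith
  have h2 : (n:ℝ) - 2 ≠ 0 := by linarith
  set r : ℝ := 1 - (n:ℝ) with hr
  have hr2 : r ≤ -2 := by rw [hr]; linarith
  -- inner integral
  have inner_eq : ∀ x ∈ Set.Iio (0:ℝ),
      (∫ y in Set.Ioi d, Real.log (d - x) / (y - x) ^ n)
        = Real.log (d - x) * ((d - x) ^ r / ((n:ℝ) - 1)) := by
    intro x hx
    have hx0 : x < 0 := hx
    have hdx : 0 < d - x := by linarith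
    have step1 : (∫ y in Set.Ioi d, Real.log (d - x) / (y - x) ^ n)
        = ∫ y in Set.Ioi d, Real.log (d - x) * (fun z : ℝ => z ^ (-(n:ℝ))) (y + (-x)) := by
      refine setIntegral_congr_fun measurableSet_Ioi fun y hy => ?_
      have hyd : d < y := hy
      have hyx : 0 < y - x := by linarith
      simp only [← sub_eq_add_neg]
      rw [Real.rpow_neg hyx.le, Real.rpow_natCast, div_eq_mul_inv]
    rw [step1, integral_const_mul, my_shift (fun z : ℝ => z ^ (-(n:ℝ))) d (-x),
      ← sub_eq_add_neg, integral_Ioi_rpow_of_lt (by linarith) hdx]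
    have e1 : -(n:ℝ) + 1 = r := by rw [hr]; ring
    rw [e1]
    congr 1
    rw [hr]
    rw [show (1:ℝ) - (n:ℝ) = -((n:ℝ) - 1) by ring, div_neg, neg_div, neg_neg]
  rw [setIntegral_congr_fun measurableSet_Iio inner_eq]
  -- outer substitution
  have step2 : (∫ x in Set.Iio (0:ℝ), Real.log (d - x) * ((d - x) ^ r / ((n:ℝ) - 1)))
      = ∫ t in Set.Ioi d, Real.log t * (t ^ r / ((n:ℝ) - 1)) := by
    rw [setIntegral_congr_set Iio_ae_eq_Iic]
    have e := integral_comp_neg_Iic (0:ℝ)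
      (fun u => Real.log (u + d) * ((u + d) ^ r / ((n:ℝ) - 1)))
    simp only [neg_add_eq_sub] at e
    rw [e, neg_zero, my_shift (fun t => Real.log t * (t ^ r / ((n:ℝ) - 1))) 0 d, zero_add]
  rw [step2]
  simp_rw [← mul_div_assoc]
  rw [integral_div, integral_Ioi_log_mul_rpow hr2 hd]
  -- final algebra
  have hcast : ((n - 2 : ℕ) : ℝ) = (n:ℝ) - 2 := by
    rw [Nat.cast_sub (by omega)]; norm_num
  have hpow : d ^ (r + 1) = (d ^ (n - 2 : ℕ) : ℝ)⁻¹ := by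
    rw [show r + 1 = -((n:ℝ) - 2) by rw [hr]; ring, Real.rpow_neg hd.le, ← hcast,
      Real.rpow_natCast]
  rw [hpow, show r + 1 = -((n:ℝ) - 2) by rw [hr]; ring]
  have hd2 : (d : ℝ) ^ (n - 2 : ℕ) ≠ 0 := pow_ne_zero _ hd.ne'
  rw [neg_sq, inv_mul_eq_div, div_div, div_div,
    div_eq_div_iff (by positivity) (by
      exact mul_ne_zero (mul_ne_zero h1 (pow_ne_zero 2 h2)) hd2)]
  ring
end

section
/- For every integer n ≥ 3 and every real d > 0, the iterated integral ∫_{x=-∞}^{0} ∫_{y=d}^{∞} log(−x/y) / (y−x)^n dy dx equals −H(n−2) / ((n−1)(n−2)·d^{n−2}). -/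
open Real MeasureTheory

open Set Filter Topology

lemma key_sum (m : ℕ) (r : ℝ) (hr : r ≠ 0) (h1r : 1 + r ≠ 0) :
    ∑ k ∈ Finset.range m, ((1+r)^(k+1))⁻¹ = (1 - ((1+r)^m)⁻¹) / r := by
  induction m with
  | zero => simp
  | succ m ih =>
      rw [Finset.sum_range_succ, ih]
      have h2 : (1+r)^m ≠ 0 := pow_ne_zero _ h1r
      field_simp
      ring

lemma core_integrable (n : ℕ) (hn : 3 ≤ n) :
    IntegrableOn (fun r : ℝ => Real.log r / (1+r)^n) (Ioi 0) := by
  have hmeas : Measurable fun r : ℝ => Real.log r / (1+r)^n :=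
    Real.measurable_log.div ((measurable_const.add measurable_id).pow_const n)
  rw [← Ioc_union_Ioi_eq_Ioi (zero_le_one (α := ℝ))]
  apply IntegrableOn.union
  · -- on Ioc 0 1, dominate by |log|
    have hlog' : IntegrableOn Real.log (Ioc (0:ℝ) 1) := by
      have h1 : IntegrableOn (fun x : ℝ => -Real.log x) (Ioc (0:ℝ) 1) := by
        apply intervalIntegral.integrableOn_deriv_of_nonneg
          (g := fun x : ℝ => x - x * Real.log x)
        · exact (continuous_id.sub Real.continuous_mul_log).continuousOn
        · intro x hx
          have : HasDerivAt (fun x : ℝ => x - x * Real.log x) (1 - (Real.log x + 1)) x :=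
            ((hasDerivAt_id x).sub (Real.hasDerivAt_mul_log hx.1.ne'))
          convert this using 1
          ring
        · intro x hx
          simp only [neg_nonneg]
          exact Real.log_nonpos hx.1.le hx.2.le
      simpa [IntegrableOn] using h1.neg'
    refine Integrable.mono hlog' (hmeas.aestronglyMeasurable.restrict) ?_
    refine (ae_restrict_iff' measurableSet_Ioc).2 (ae_of_all _ fun x hx => ?_)
    have h1x : (1:ℝ) ≤ (1+x)^n := one_le_pow₀ (by linarith [hx.1] : (1:ℝ) ≤ 1 + x)
    rw [Real.norm_eq_abs, Real.norm_eq_abs, abs_div,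
      abs_of_pos (by positivity : (0:ℝ) < (1+x)^n)]
    exact div_le_self (abs_nonneg _) h1x
  · -- on Ioi 1, dominate by x ^ (-2)
    have hg : IntegrableOn (fun x : ℝ => x ^ (-2:ℝ)) (Ioi 1) :=
      integrableOn_Ioi_rpow_of_lt (by norm_num) one_pos
    refine Integrable.mono hg (hmeas.aestronglyMeasurable.restrict) ?_
    refine (ae_restrict_iff' measurableSet_Ioi).2 (ae_of_all _ fun x hx => ?_)
    have hx1 : (1:ℝ) < x := hx
    have hx0 : (0:ℝ) < x := by linarith
    have hlx : 0 ≤ Real.log x := Real.log_nonneg hx1.le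
    rw [Real.norm_eq_abs, Real.norm_eq_abs, abs_div, abs_of_nonneg hlx,
      abs_of_pos (by positivity : (0:ℝ) < (1+x)^n),
      abs_of_pos (Real.rpow_pos_of_pos hx0 _)]
    have h1 : Real.log x ≤ x := (Real.log_le_sub_one_of_pos hx0).trans (by linarith)
    have h2 : x^3 ≤ (1+x)^n := by
      calc x^3 ≤ x^n := pow_le_pow_right₀ hx1.le hn
        _ ≤ (1+x)^n := pow_le_pow_left₀ hx0.le (by linarith) n
    have hrp : x ^ (-2:ℝ) = (x^2)⁻¹ := by
      rw [Real.rpow_neg hx0.le, ← Real.rpow_natCast x 2]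
      norm_num
    rw [hrp, div_le_iff₀ (by positivity : (0:ℝ) < (1+x)^n), inv_mul_eq_div,
      le_div_iff₀ (by positivity : (0:ℝ) < x^2)]
    nlinarith [mul_le_mul_of_nonneg_right h1 (sq_nonneg x)]

noncomputable def antiF (n : ℕ) (r : ℝ) : ℝ :=
  ((1 - ((1+r)^(n-1))⁻¹) * Real.log r - Real.log (1+r)
    + ∑ k ∈ Finset.range (n-2), (((k:ℝ)+1)⁻¹ * ((1+r)^(k+1))⁻¹)) / ((n:ℝ)-1)

lemma antiF_deriv (n : ℕ) (hn : 3 ≤ n) {r : ℝ} (hr : 0 < r) :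
    HasDerivAt (antiF n) (Real.log r / (1+r)^n) r := by
  obtain ⟨m, rfl⟩ : ∃ m, n = m + 3 := ⟨n - 3, by omega⟩
  have h1r : (0:ℝ) < 1 + r := by linarith
  have h1r' : (1:ℝ) + r ≠ 0 := h1r.ne'
  have hid : HasDerivAt (fun s : ℝ => 1 + s) 1 r := by
    simpa using (hasDerivAt_id r).const_add 1
  have hpow : ∀ p : ℕ, HasDerivAt (fun s : ℝ => ((1+s)^p)⁻¹)
      (-((p:ℝ) * (1+r)^(p-1) * 1) / ((1+r)^p)^2) r :=
    fun p => (hid.pow p).inv (pow_ne_zero _ h1r')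
  have hterm1 : HasDerivAt (fun s => (1 - ((1+s)^(m+3-1))⁻¹) * Real.log s)
      ((0 - (-(((m+3-1:ℕ):ℝ) * (1+r)^(m+3-1-1) * 1) / ((1+r)^(m+3-1))^2)) * Real.log r
        + (1 - ((1+r)^(m+3-1))⁻¹) * r⁻¹) r :=
    ((hasDerivAt_const r (1:ℝ)).sub (hpow (m+3-1))).mul (Real.hasDerivAt_log hr.ne')
  have hterm2 : HasDerivAt (fun s : ℝ => Real.log (1+s)) (1 / (1+r)) r := hid.log h1r'
  have hterm3 : HasDerivAt
      (fun s : ℝ => ∑ k ∈ Finset.range (m+3-2), (((k:ℝ)+1)⁻¹ * ((1+s)^(k+1))⁻¹))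
      (∑ k ∈ Finset.range (m+3-2),
        (((k:ℝ)+1)⁻¹ * (-(((k+1:ℕ):ℝ) * (1+r)^(k+1-1) * 1) / ((1+r)^(k+1))^2))) r :=
    HasDerivAt.fun_sum fun k _ => (hpow (k+1)).const_mul _
  have hD := ((hterm1.sub hterm2).add hterm3).div_const (((m+3:ℕ):ℝ)-1)
  refine hD.congr_deriv ?_
  have hsum : ∑ k ∈ Finset.range (m+3-2),
      (((k:ℝ)+1)⁻¹ * (-(((k+1:ℕ):ℝ) * (1+r)^(k+1-1) * 1) / ((1+r)^(k+1))^2))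
      = -∑ k ∈ Finset.range (m+1), ((1+r)^(k+2))⁻¹ := by
    rw [show m+3-2 = m+1 by omega, ← Finset.sum_neg_distrib]
    refine Finset.sum_congr rfl fun k _ => ?_
    have hk : ((k:ℝ)+1) ≠ 0 := by positivity
    have hp : (1+r)^(k+1) ≠ 0 := pow_ne_zero _ h1r'
    have hp2 : (1+r)^(k+2) ≠ 0 := pow_ne_zero _ h1r'
    push_cast
    field_simp
    ring
  have hkey : (1 - ((1+r)^(m+3-1))⁻¹) * r⁻¹
      = (1+r)⁻¹ + ∑ k ∈ Finset.range (m+1), ((1+r)^(k+2))⁻¹ := by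
    have hks := key_sum (m+2) r hr.ne' h1r'
    have hsplit : ∑ k ∈ Finset.range (m+2), ((1+r)^(k+1))⁻¹
        = ∑ k ∈ Finset.range (m+1), ((1+r)^(k+1+1))⁻¹ + ((1+r)^(0+1))⁻¹ :=
      Finset.sum_range_succ' _ (m+1)
    rw [show m+3-1 = m+2 by omega, ← div_eq_mul_inv, ← hks, hsplit, pow_one, add_comm]
  rw [hsum, hkey, show m+3-1-1 = m+1 by omega, show m+3-1 = m+2 by omega]
  have hc : ((m+3:ℕ):ℝ) - 1 = ((m+2:ℕ):ℝ) := by push_cast; ring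
  rw [hc]
  have hcm : ((m+2:ℕ):ℝ) ≠ 0 := by positivity
  have hp3 : (1+r)^(m+3) ≠ 0 := pow_ne_zero _ h1r'
  have hp2' : (1+r)^(m+2) ≠ 0 := pow_ne_zero _ h1r'
  generalize (∑ k ∈ Finset.range (m+1), ((1+r)^(k+2))⁻¹) = S
  field_simp
  ring

lemma antiF_zero (n : ℕ) :
    antiF n 0 = (∑ k ∈ Finset.range (n-2), ((k:ℝ)+1)⁻¹) / ((n:ℝ)-1) := by
  simp [antiF]

lemma antiF_tendsto_top (n : ℕ) (hn : 3 ≤ n) :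
    Tendsto (antiF n) atTop (𝓝 0) := by
  have hre : antiF n = fun r =>
      ((Real.log r - Real.log (1+r)) - ((1+r)^(n-1))⁻¹ * Real.log r
        + ∑ k ∈ Finset.range (n-2), (((k:ℝ)+1)⁻¹ * ((1+r)^(k+1))⁻¹)) / ((n:ℝ)-1) := by
    funext r; unfold antiF; ring
  rw [hre, show (0:ℝ) = (0 - 0 + 0) / ((n:ℝ)-1) by norm_num]
  apply Tendsto.div_const
  refine Tendsto.add (Tendsto.sub ?_ ?_) ?_
  · -- log r - log (1+r) → 0
    have ha : Tendsto (fun r:ℝ => r⁻¹ + 1) atTop (𝓝 (0+1)) :=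
      tendsto_inv_atTop_zero.add tendsto_const_nhds
    have hb : Tendsto (fun r:ℝ => (r⁻¹+1)⁻¹) atTop (𝓝 1) := by
      simpa using ha.inv₀ (by norm_num)
    have hc : Tendsto (fun r:ℝ => -Real.log (r⁻¹+1)) atTop (𝓝 0) := by
      have := (Real.continuousAt_log one_ne_zero).tendsto.comp hb
      simpa [Function.comp_def] using this
    apply hc.congr'
    filter_upwards [eventually_gt_atTop (0:ℝ)] with r hr
    have h1r : (0:ℝ) < 1 + r := by linarith
    rw [show r⁻¹ + 1 = (1+r)/r by field_simp, Real.log_div h1r.ne' hr.ne']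
    ring
  · -- ((1+r)^(n-1))⁻¹ * log r → 0
    have htar : Tendsto (fun x:ℝ => Real.log x / x^(2:ℝ)) atTop (𝓝 0) :=
      (isLittleO_log_rpow_atTop (by norm_num : (0:ℝ) < 2)).tendsto_div_nhds_zero
    apply squeeze_zero' ?_ ?_ htar
    · filter_upwards [eventually_ge_atTop (1:ℝ)] with r hr
      have := Real.log_nonneg hr
      positivity
    · filter_upwards [eventually_ge_atTop (1:ℝ)] with r hr
      have hr0 : (0:ℝ) < r := by linarith
      have hlr : 0 ≤ Real.log r := Real.log_nonneg hr
      rw [inv_mul_eq_div]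
      apply div_le_div_of_nonneg_left hlr (by positivity)
      calc r ^ (2:ℝ) = r^(2:ℕ) := by rw [← Real.rpow_natCast r 2]; norm_num
        _ ≤ r^(n-1) := pow_le_pow_right₀ hr (by omega)
        _ ≤ (1+r)^(n-1) := pow_le_pow_left₀ hr0.le (by linarith) _
  · -- sum → 0
    rw [show (0:ℝ) = ∑ k ∈ Finset.range (n-2), (0:ℝ) by simp]
    refine tendsto_finset_sum _ fun k _ => ?_
    have h1 : Tendsto (fun r:ℝ => 1+r) atTop atTop :=
      tendsto_atTop_add_const_left _ 1 tendsto_id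
    have h2 : Tendsto (fun r:ℝ => ((1+r)^(k+1))⁻¹) atTop (𝓝 0) :=
      ((tendsto_pow_atTop (Nat.succ_ne_zero k)).comp h1).inv_tendsto_atTop
    simpa using h2.const_mul (((k:ℝ)+1)⁻¹)

lemma antiF_cwa (n : ℕ) (hn : 3 ≤ n) : ContinuousWithinAt (antiF n) (Ici 0) 0 := by
  rw [← continuousWithinAt_Ioi_iff_Ici]
  unfold ContinuousWithinAt
  rw [antiF_zero, show (∑ k ∈ Finset.range (n-2), ((k:ℝ)+1)⁻¹) / ((n:ℝ)-1)
    = (0 - 0 + ∑ k ∈ Finset.range (n-2), (((k:ℝ)+1)⁻¹ * ((1+(0:ℝ))^(k+1))⁻¹)) / ((n:ℝ)-1) by simp]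
  unfold antiF
  apply Tendsto.div_const
  refine Tendsto.add (Tendsto.sub ?_ ?_) ?_
  · -- (1 - P) * log r → 0 as r → 0⁺
    have hlr : Tendsto (fun r:ℝ => Real.log r * r) (𝓝[>] 0) (𝓝 0) := by
      have := tendsto_log_mul_rpow_nhdsGT_zero (one_pos)
      refine this.congr fun r => ?_
      rw [Real.rpow_one]
    have hQ : ContinuousAt
        (fun r:ℝ => (∑ i ∈ Finset.range (n-1), (1+r)^i) * ((1+r)^(n-1))⁻¹) 0 := by
      apply ContinuousAt.mul
      · exact (continuous_finset_sum _ fun i _ =>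
          (continuous_const.add continuous_id).pow i).continuousAt
      · exact ((continuous_const.add continuous_id).pow (n-1)).continuousAt.inv₀ (by norm_num)
    have hmul := hlr.mul (hQ.tendsto.mono_left nhdsWithin_le_nhds)
    rw [zero_mul] at hmul
    apply hmul.congr'
    filter_upwards [self_mem_nhdsWithin] with r (hr : (0:ℝ) < r)
    have h1r : (1:ℝ) + r ≠ 0 := by positivity
    have hPne : ((1+r):ℝ)^(n-1) ≠ 0 := pow_ne_zero _ h1r
    have hg : (∑ i ∈ Finset.range (n-1), (1+r)^i) * r = (1+r)^(n-1) - 1 := by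
      simpa using geom_sum_mul (1+r) (n-1)
    field_simp
    linear_combination Real.log r * hg
  · -- log(1+r) → 0
    have : ContinuousAt (fun r:ℝ => Real.log (1+r)) 0 :=
      (Real.continuousAt_log (by norm_num)).comp
        ((continuous_const.add continuous_id).continuousAt)
    have h := this.tendsto.mono_left (nhdsWithin_le_nhds (s := Ioi (0:ℝ)))
    simpa using h
  · -- sum continuous
    · refine tendsto_finset_sum _ fun k _ => ?_
      have h : Tendsto (fun r:ℝ => ((1+r)^(k+1))⁻¹) (𝓝[>] (0:ℝ))
          (𝓝 (((1+(0:ℝ))^(k+1))⁻¹)) :=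
        ((((continuous_const.add continuous_id).pow (k+1)).continuousAt.inv₀
          (by simp)).tendsto.mono_left (nhdsWithin_le_nhds (s := Ioi (0:ℝ))))
      exact h.const_mul _

lemma B_value (n : ℕ) (hn : 3 ≤ n) :
    ∫ r in Ioi (0:ℝ), Real.log r / (1+r)^n
      = -(∑ k ∈ Finset.range (n-2), ((k:ℝ)+1)⁻¹) / ((n:ℝ)-1) := by
  rw [integral_Ioi_of_hasDerivAt_of_tendsto (antiF_cwa n hn)
    (fun x hx => antiF_deriv n hn hx) (core_integrable n hn) (antiF_tendsto_top n hn),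
    antiF_zero, zero_sub, neg_div]

lemma slice_rw (n : ℕ) {y : ℝ} (hy : 0 < y) :
    (fun x : ℝ => Real.log (y*x/y) / (y+y*x)^n)
      = fun x => (y^n)⁻¹ * (Real.log x / (1+x)^n) := by
  funext x
  rw [mul_div_cancel_left₀ _ hy.ne', show y + y*x = y*(1+x) by ring, mul_pow,
    mul_comm (y^n), div_mul_eq_div_div, div_eq_inv_mul]

lemma slice_integrable (n : ℕ) (hn : 3 ≤ n) {y : ℝ} (hy : 0 < y) :
    IntegrableOn (fun u : ℝ => Real.log (u/y) / (y+u)^n) (Ioi 0) := by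
  have h := integrableOn_Ioi_comp_mul_left_iff
    (fun u : ℝ => Real.log (u/y) / (y+u)^n) 0 hy
  rw [mul_zero] at h
  rw [← h]
  have : (fun x : ℝ => Real.log (y*x/y) / (y+y*x)^n)
      = fun x => (y^n)⁻¹ * (Real.log x / (1+x)^n) := slice_rw n hy
  rw [show (fun x : ℝ => (fun u : ℝ => Real.log (u/y) / (y+u)^n) (y*x)) =
    (fun x : ℝ => Real.log (y*x/y) / (y+y*x)^n) from rfl, this]
  exact (core_integrable n hn).const_mul _

lemma slice_val (n : ℕ) (hn : 3 ≤ n) {y : ℝ} (hy : 0 < y) :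
    ∫ u in Ioi (0:ℝ), Real.log (u/y) / (y+u)^n
      = y * ((y^n)⁻¹ * ∫ r in Ioi (0:ℝ), Real.log r / (1+r)^n) := by
  have h := integral_comp_mul_left_Ioi
    (fun u : ℝ => Real.log (u/y) / (y+u)^n) 0 hy
  rw [mul_zero, smul_eq_mul] at h
  rw [show (fun x : ℝ => (fun u : ℝ => Real.log (u/y) / (y+u)^n) (y*x)) =
    (fun x : ℝ => Real.log (y*x/y) / (y+y*x)^n) from rfl, slice_rw n hy,
    integral_const_mul] at h
  rw [h]
  field_simp

lemma slice_abs_rw (n : ℕ) {y : ℝ} (hy : 0 < y) :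
    (fun x : ℝ => ‖Real.log (y*x/y) / (y+y*x)^n‖)
      = fun x => (y^n)⁻¹ * ‖Real.log x / (1+x)^n‖ := by
  funext x
  rw [show Real.log (y*x/y) / (y+y*x)^n =
    (y^n)⁻¹ * (Real.log x / (1+x)^n) from congrFun (slice_rw n hy) x,
    norm_mul, Real.norm_eq_abs (((y:ℝ)^n)⁻¹), abs_of_pos (by positivity)]

lemma slice_abs_val (n : ℕ) (hn : 3 ≤ n) {y : ℝ} (hy : 0 < y) :
    ∫ u in Ioi (0:ℝ), ‖Real.log (u/y) / (y+u)^n‖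
      = y * ((y^n)⁻¹ * ∫ r in Ioi (0:ℝ), ‖Real.log r / (1+r)^n‖) := by
  have h := integral_comp_mul_left_Ioi
    (fun u : ℝ => ‖Real.log (u/y) / (y+u)^n‖) 0 hy
  rw [mul_zero, smul_eq_mul] at h
  rw [show (fun x : ℝ => (fun u : ℝ => ‖Real.log (u/y) / (y+u)^n‖) (y*x)) =
    (fun x : ℝ => ‖Real.log (y*x/y) / (y+y*x)^n‖) from rfl, slice_abs_rw n hy,
    integral_const_mul] at h
  rw [h]
  field_simp

/-- For every integer `n ≥ 3` and real `d > 0`,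
`∫_{x=-∞}^{0} ∫_{y=d}^{∞} log(−x/y) / (y−x)^n dy dx = −H(n−2) / ((n−1)(n−2)·d^{n−2})`. -/
theorem iterated_integral_log_neg_x_div_y (n : ℕ) (hn : 3 ≤ n) (d : ℝ) (hd : 0 < d) :
    (∫ x in Set.Iio (0 : ℝ), ∫ y in Set.Ioi d, Real.log (-x / y) / (y - x) ^ n) =
      -H (n - 2) / (((n : ℝ) - 1) * ((n : ℝ) - 2) * d ^ (n - 2)) := by
  have hn3 : (3:ℝ) ≤ (n:ℝ) := by exact_mod_cast hn
  -- Step 1 : reflect x ↦ -u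
  have hrefl : (∫ x in Set.Iio (0 : ℝ), ∫ y in Set.Ioi d, Real.log (-x / y) / (y - x) ^ n)
      = ∫ u in Ioi (0:ℝ), ∫ y in Ioi d, Real.log (u / y) / (y + u) ^ n := by
    calc (∫ x in Set.Iio (0 : ℝ), ∫ y in Set.Ioi d, Real.log (-x / y) / (y - x) ^ n)
        = ∫ x in Set.Iic (0 : ℝ), ∫ y in Set.Ioi d, Real.log (-x / y) / (y - x) ^ n :=
          setIntegral_congr_set Iio_ae_eq_Iic
      _ = ∫ x in Set.Iic (0 : ℝ), ∫ y in Ioi d, Real.log (-x / y) / (y + -x) ^ n := by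
          refine setIntegral_congr_fun measurableSet_Iic fun x _ => ?_
          simp only [sub_eq_add_neg]
      _ = ∫ u in Ioi (-(0:ℝ)), ∫ y in Ioi d, Real.log (u / y) / (y + u) ^ n := by
          exact integral_comp_neg_Iic (0:ℝ)
            (fun u : ℝ => ∫ y in Ioi d, Real.log (u / y) / (y + u) ^ n)
      _ = ∫ u in Ioi (0:ℝ), ∫ y in Ioi d, Real.log (u / y) / (y + u) ^ n := by rw [neg_zero]
  rw [hrefl]
  -- Step 2 : Fubini
  have hmeasg : AEStronglyMeasurable (Function.uncurry
      (fun u y : ℝ => Real.log (u / y) / (y + u) ^ n))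
      ((volume.restrict (Ioi (0:ℝ))).prod (volume.restrict (Ioi d))) := by
    apply Measurable.aestronglyMeasurable
    exact (Real.measurable_log.comp (measurable_fst.div measurable_snd)).div
      ((measurable_snd.add measurable_fst).pow_const n)
  have hint : Integrable (Function.uncurry
      (fun u y : ℝ => Real.log (u / y) / (y + u) ^ n))
      ((volume.restrict (Ioi (0:ℝ))).prod (volume.restrict (Ioi d))) := by
    rw [integrable_prod_iff' hmeasg]
    constructor
    · refine (ae_restrict_iff' measurableSet_Ioi).2 (ae_of_all _ fun y hy => ?_)
      exact slice_integrable n hn (hd.trans hy)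
    · have hlt : ((1:ℝ) - (n:ℝ)) < -1 := by linarith
      have hA : IntegrableOn
          (fun y : ℝ => (y ^ ((1:ℝ) - (n:ℝ))) *
            (∫ r in Ioi (0:ℝ), ‖Real.log r / (1+r)^n‖)) (Ioi d) :=
        (integrableOn_Ioi_rpow_of_lt hlt hd).mul_const _
      refine Integrable.congr hA ?_
      refine (ae_restrict_iff' measurableSet_Ioi).2 (ae_of_all _ fun y hy => ?_)
      have hy0 : 0 < y := hd.trans hy
      show y ^ ((1:ℝ) - (n:ℝ)) * (∫ r in Ioi (0:ℝ), ‖Real.log r / (1+r)^n‖)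
        = ∫ u in Ioi (0:ℝ), ‖Real.log (u/y) / (y+u)^n‖
      rw [slice_abs_val n hn hy0, Real.rpow_sub hy0, Real.rpow_one, Real.rpow_natCast]
      ring
  have hswap := integral_integral_swap hint
  rw [hswap]
  -- Step 3 : inner slice values
  have hinner : (∫ y in Ioi d, ∫ u in Ioi (0:ℝ), Real.log (u / y) / (y + u) ^ n)
      = ∫ y in Ioi d, (-(∑ k ∈ Finset.range (n-2), ((k:ℝ)+1)⁻¹) / ((n:ℝ)-1))
          * y ^ ((1:ℝ) - (n:ℝ)) := by
    refine setIntegral_congr_fun measurableSet_Ioi fun y hy => ?_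
    have hy0 : 0 < y := hd.trans hy
    rw [slice_val n hn hy0, B_value n hn]
    rw [Real.rpow_sub hy0, Real.rpow_one, Real.rpow_natCast]
    field_simp
  rw [hinner, integral_const_mul, integral_Ioi_rpow_of_lt (by linarith) hd]
  -- Step 4 : final algebra
  have hc2 : ((n:ℝ) - 2) = ((n - 2 : ℕ) : ℝ) := by
    have : (2:ℕ) ≤ n := by omega
    push_cast [Nat.cast_sub this]
    ring
  have hH : H (n-2) = ∑ k ∈ Finset.range (n-2), ((k:ℝ)+1)⁻¹ := by
    unfold H; exact Finset.sum_congr rfl fun k _ => one_div _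
  rw [show (1:ℝ) - (n:ℝ) + 1 = -((n:ℝ) - 2) by ring, Real.rpow_neg hd.le, hc2,
    Real.rpow_natCast, hH]
  have h1 : (n:ℝ) - 1 ≠ 0 := by linarith
  have h2 : ((n - 2 : ℕ) : ℝ) ≠ 0 := by rw [← hc2]; linarith
  have h3 : d ^ (n - 2) ≠ 0 := pow_ne_zero _ hd.ne'
  rw [← hc2]
  field_simp
end

section
/- For every integer n ≥ 3, the integral ∫_{-∞}^{0} log(−z) / (1−z)^n dz equals −H(n−2) / (n−1). -/
open Real MeasureTheory
open Set Filter Topology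

/-- The antiderivative. -/
noncomputable def FF (m : ℕ) (z : ℝ) : ℝ :=
  ((((1 - z) ^ m)⁻¹ - 1) * Real.log (-z) + Real.log (1 - z)
    - ∑ k ∈ Finset.range (m - 1), ((1 - z) ^ (k + 1))⁻¹ / (k + 1)) / m

lemma geom_aux (m : ℕ) {z : ℝ} (hz : (1 : ℝ) - z ≠ 0) :
    ((1 - z) ^ m)⁻¹ - 1 = z * ∑ k ∈ Finset.range m, ((1 - z) ^ (k + 1))⁻¹ := by
  induction m with
  | zero => simp
  | succ p ih =>
    rw [Finset.sum_range_succ, mul_add, ← ih]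
    have hp : ((1:ℝ) - z) ^ p ≠ 0 := pow_ne_zero _ hz
    field_simp
    ring

lemma hasDerivAt_one_sub (z : ℝ) : HasDerivAt (fun z : ℝ => 1 - z) (-1) z := by
  simpa using (hasDerivAt_id z).const_sub 1

lemma hasDerivAt_inv_pow (j : ℕ) {z : ℝ} (hz : (1 : ℝ) - z ≠ 0) :
    HasDerivAt (fun z : ℝ => ((1 - z) ^ j)⁻¹) ((j : ℝ) * ((1 - z) ^ (j + 1))⁻¹) z := by
  have h := (hasDerivAt_zpow (-(j : ℤ)) (1 - z) (Or.inl hz)).comp z (hasDerivAt_one_sub z)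
  have h3 : ((fun x : ℝ => x ^ (-(j:ℤ))) ∘ (fun z : ℝ => 1 - z)) = fun z : ℝ => ((1 - z) ^ j)⁻¹ := by
    funext x
    simp [zpow_neg]
  rw [h3] at h
  refine h.congr_deriv ?_
  have hz' : ((1:ℝ) - z) ^ (j+1) ≠ 0 := pow_ne_zero _ hz
  rw [show (-(j:ℤ)) - 1 = -((j:ℤ) + 1) by ring, zpow_neg, ← zpow_natCast ((1:ℝ) - z) (j + 1)]
  push_cast
  ring

lemma hasDerivAt_FF (m : ℕ) (hm : 1 ≤ m) {z : ℝ} (hz : z < 0) :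
    HasDerivAt (FF m) (Real.log (-z) / (1 - z) ^ (m + 1)) z := by
  have h1z : (0:ℝ) < 1 - z := by linarith
  have hz1 : (1:ℝ) - z ≠ 0 := ne_of_gt h1z
  have hzne : z ≠ 0 := hz.ne
  have hlog : HasDerivAt (fun z : ℝ => Real.log (-z)) z⁻¹ z := by
    have h := (Real.hasDerivAt_log (neg_ne_zero.mpr hzne)).comp z (hasDerivAt_neg z)
    refine h.congr_deriv ?_
    rw [inv_neg]; ring
  have h2 : HasDerivAt (fun z : ℝ => ((1 - z) ^ m)⁻¹ - 1)
      ((m : ℝ) * ((1 - z) ^ (m + 1))⁻¹) z := (hasDerivAt_inv_pow m hz1).sub_const 1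
  have h3 := h2.mul hlog
  have h4 : HasDerivAt (fun z : ℝ => Real.log (1 - z)) ((1 - z)⁻¹ * (-1)) z :=
    (Real.hasDerivAt_log hz1).comp z (hasDerivAt_one_sub z)
  have h5 : HasDerivAt (fun z : ℝ => ∑ k ∈ Finset.range (m - 1), ((1 - z) ^ (k + 1))⁻¹ / (k + 1))
      (∑ k ∈ Finset.range (m - 1), ((k + 1 : ℕ) : ℝ) * ((1 - z) ^ (k + 2))⁻¹ / ((k : ℝ) + 1)) z := by
    apply HasDerivAt.fun_sum
    intro k _
    exact (hasDerivAt_inv_pow (k + 1) hz1).div_const _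
  have htot := ((h3.add h4).sub h5).div_const (m : ℝ)
  have hFF : FF m = fun z : ℝ => ((((1 - z) ^ m)⁻¹ - 1) * Real.log (-z) + Real.log (1 - z)
    - ∑ k ∈ Finset.range (m - 1), ((1 - z) ^ (k + 1))⁻¹ / (k + 1)) / m := rfl
  rw [hFF]
  refine htot.congr_deriv ?_
  -- now prove the derivative value equality
  obtain ⟨p, rfl⟩ : ∃ p, m = p + 1 := ⟨m - 1, by omega⟩
  simp only [Nat.add_sub_cancel]
  have hsum : ∑ k ∈ Finset.range p, ((k + 1 : ℕ) : ℝ) * ((1 - z) ^ (k + 2))⁻¹ / ((k : ℝ) + 1)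
      = ∑ k ∈ Finset.range p, ((1 - z) ^ (k + 2))⁻¹ := by
    refine Finset.sum_congr rfl fun k _ => ?_
    have : ((k : ℝ) + 1) ≠ 0 := by positivity
    push_cast
    field_simp
  rw [hsum]
  have hkey : ((1 - z) ^ (p + 1))⁻¹ - 1
      = z * ((∑ k ∈ Finset.range p, ((1 - z) ^ (k + 2))⁻¹) + (1 - z)⁻¹) := by
    rw [geom_aux (p + 1) hz1, Finset.sum_range_succ']
    simp
  rw [hkey]
  generalize (∑ k ∈ Finset.range p, ((1 - z) ^ (k + 2))⁻¹) = S
  have hp2 : ((1:ℝ) - z) ^ (p + 2) ≠ 0 := pow_ne_zero _ hz1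
  have hp1 : ((1:ℝ) - z) ^ (p + 1) ≠ 0 := pow_ne_zero _ hz1
  have hm0 : ((p:ℝ) + 1) ≠ 0 := by positivity
  push_cast
  field_simp
  ring

lemma tendsto_one_sub_atBot : Tendsto (fun z : ℝ => 1 - z) atBot atTop := by
  simpa [sub_eq_add_neg] using tendsto_atTop_add_const_left atBot (1:ℝ) tendsto_neg_atBot_atTop

lemma tendsto_FF_atBot (m : ℕ) (hm : 2 ≤ m) : Tendsto (FF m) atBot (𝓝 0) := by
  have hinv : Tendsto (fun z : ℝ => (1 - z)⁻¹) atBot (𝓝 0) :=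
    tendsto_inv_atTop_zero.comp tendsto_one_sub_atBot
  have hT1 : Tendsto (fun z : ℝ => Real.log (-z) * ((1 - z) ^ m)⁻¹) atBot (𝓝 0) := by
    apply tendsto_of_tendsto_of_tendsto_of_le_of_le' tendsto_const_nhds hinv
    · filter_upwards [eventually_le_atBot (-1 : ℝ)] with z hz
      have h1 : (1:ℝ) ≤ -z := by linarith
      have h0 : (0:ℝ) ≤ 1 - z := by linarith
      exact mul_nonneg (Real.log_nonneg h1) (inv_nonneg.mpr (pow_nonneg h0 m))
    · filter_upwards [eventually_le_atBot (-1 : ℝ)] with z hz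
      have h0 : (0:ℝ) < 1 - z := by linarith
      have ha : Real.log (-z) ≤ 1 - z :=
        (Real.log_le_sub_one_of_pos (by linarith)).trans (by linarith)
      have hb : (1 - z) ^ 2 ≤ (1 - z) ^ m := pow_le_pow_right₀ (by linarith) hm
      calc Real.log (-z) * ((1 - z) ^ m)⁻¹
          ≤ (1 - z) * ((1 - z) ^ m)⁻¹ := by gcongr
        _ ≤ (1 - z) * ((1 - z) ^ 2)⁻¹ := by
            exact mul_le_mul_of_nonneg_left (by gcongr) (by linarith)
        _ = (1 - z)⁻¹ := by
            rw [sq, mul_inv, ← mul_assoc, mul_inv_cancel₀ (ne_of_gt h0), one_mul]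
  have hT2 : Tendsto (fun z : ℝ => Real.log (1 - z) - Real.log (-z)) atBot (𝓝 0) := by
    have hq : Tendsto (fun z : ℝ => (1 - z) / (-z)) atBot (𝓝 1) := by
      have hneg : Tendsto (fun z : ℝ => -z) atBot atTop := tendsto_neg_atBot_atTop
      have base : Tendsto (fun z : ℝ => (-z)⁻¹ + 1) atBot (𝓝 (0 + 1)) :=
        (tendsto_inv_atTop_zero.comp hneg).add tendsto_const_nhds
      rw [show (0:ℝ) + 1 = 1 by norm_num] at base
      apply base.congr'
      filter_upwards [eventually_lt_atBot (0 : ℝ)] with z hz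
      have hzz : -z ≠ 0 := by intro h; simp at h; linarith
      have hz0 : z ≠ 0 := fun h => hzz (by simp [h])
      field_simp
      ring
    have hlog := ((Real.continuousAt_log one_ne_zero).tendsto).comp hq
    rw [Real.log_one] at hlog
    apply hlog.congr'
    filter_upwards [eventually_lt_atBot (0 : ℝ)] with z hz
    simp only [Function.comp]
    rw [Real.log_div (by linarith) (neg_ne_zero.mpr hz.ne)]
  have hT3 : Tendsto (fun z : ℝ =>
      ∑ k ∈ Finset.range (m - 1), ((1 - z) ^ (k + 1))⁻¹ / (k + 1)) atBot (𝓝 0) := by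
    have : Tendsto (fun z : ℝ =>
        ∑ k ∈ Finset.range (m - 1), ((1 - z) ^ (k + 1))⁻¹ / (k + 1)) atBot
        (𝓝 (∑ k ∈ Finset.range (m - 1), 0)) := by
      apply tendsto_finset_sum
      intro k _
      have hpow : Tendsto (fun z : ℝ => (1 - z) ^ (k + 1)) atBot atTop :=
        (tendsto_pow_atTop k.succ_ne_zero).comp tendsto_one_sub_atBot
      simpa using (tendsto_inv_atTop_zero.comp hpow).div_const ((k : ℝ) + 1)
    simpa using this
  have := ((hT1.add hT2).sub hT3).div_const (m : ℝ)
  rw [show ((0:ℝ) + 0 - 0) / m = 0 by norm_num] at this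
  apply this.congr
  intro z
  show _ = FF m z
  rw [FF]
  ring

lemma FF_zero (m : ℕ) : FF m 0 = -H (m - 1) / m := by
  simp only [FF, H, neg_zero, Real.log_zero, sub_zero, one_pow, inv_one, sub_self, zero_mul,
    Real.log_one, mul_zero, zero_add, one_div]
  rw [zero_sub, neg_div]

lemma tendsto_FF_Iic (m : ℕ) : Tendsto (FF m) (𝓝[≤] (0:ℝ)) (𝓝 (-H (m - 1) / m)) := by
  have hlogz : Tendsto (fun z : ℝ => Real.log z * z) (𝓝[≤] (0:ℝ)) (𝓝 0) := by
    have hset : (Iic (0:ℝ)) = Iio 0 ∪ {0} := by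
      ext x; simp [le_iff_lt_or_eq]
    rw [hset, nhdsWithin_union, tendsto_sup]
    constructor
    · exact tendsto_log_mul_self_nhdsLT_zero
    · rw [nhdsWithin_singleton]
      simpa using tendsto_pure_nhds (fun z : ℝ => Real.log z * z) 0
  have hG : Tendsto (fun z : ℝ => ∑ k ∈ Finset.range m, ((1 - z) ^ (k + 1))⁻¹)
      (𝓝[≤] (0:ℝ)) (𝓝 (∑ k ∈ Finset.range m, (1:ℝ))) := by
    apply tendsto_finset_sum
    intro k _
    have : ContinuousAt (fun z : ℝ => ((1 - z) ^ (k + 1))⁻¹) 0 :=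
      ((continuousAt_const.sub continuousAt_id).pow (k + 1)).inv₀ (by norm_num)
    simpa using this.tendsto.mono_left nhdsWithin_le_nhds
  have hlog1 : Tendsto (fun z : ℝ => Real.log (1 - z)) (𝓝[≤] (0:ℝ)) (𝓝 0) := by
    have : ContinuousAt (fun z : ℝ => Real.log (1 - z)) 0 := by
      apply ContinuousAt.log (continuousAt_const.sub continuousAt_id)
      norm_num
    simpa using this.tendsto.mono_left nhdsWithin_le_nhds
  have hS : Tendsto (fun z : ℝ => ∑ k ∈ Finset.range (m - 1), ((1 - z) ^ (k + 1))⁻¹ / (k + 1))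
      (𝓝[≤] (0:ℝ)) (𝓝 (∑ k ∈ Finset.range (m - 1), (1:ℝ) / (k + 1))) := by
    apply tendsto_finset_sum
    intro k _
    have : ContinuousAt (fun z : ℝ => ((1 - z) ^ (k + 1))⁻¹ / (k + 1)) 0 :=
      (((continuousAt_const.sub continuousAt_id).pow (k + 1)).inv₀ (by norm_num)).div_const _
    simpa using this.tendsto.mono_left nhdsWithin_le_nhds
  have htot := (((hlogz.mul hG).add hlog1).sub hS).div_const (m : ℝ)
  have hval : (0 * (∑ k ∈ Finset.range m, (1:ℝ)) + 0
      - ∑ k ∈ Finset.range (m - 1), (1:ℝ) / (k + 1)) / m = -H (m - 1) / m := by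
    rw [H]
    ring
  rw [hval] at htot
  apply htot.congr'
  filter_upwards [eventually_mem_nhdsWithin] with z (hz : z ≤ 0)
  have h1 : (1:ℝ) - z ≠ 0 := by intro h; linarith
  rw [FF]
  rw [geom_aux m h1]
  rw [show Real.log (-z) = Real.log z from Real.log_neg_eq_log z]
  ring

lemma integrableOn_f (m : ℕ) (hm : 2 ≤ m) :
    IntegrableOn (fun z : ℝ => Real.log (-z) / (1 - z) ^ (m + 1)) (Iio 0) := by
  have hm1 : 1 ≤ m := by omega
  have key : IntegrableOn (fun t : ℝ => Real.log t / (1 + t) ^ (m + 1)) (Ioi 0) := by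
    rw [← Set.Ioc_union_Ioi_eq_Ioi (zero_le_one)]
    apply IntegrableOn.union
    · -- on Ioc 0 1
      have hpos : IntegrableOn (fun t : ℝ => -(Real.log t / (1 + t) ^ (m + 1)))
          (Ioc (0:ℝ) 1) := by
        apply intervalIntegral.integrableOn_deriv_of_nonneg
          (g := fun t : ℝ => FF m (-t))
        · -- continuity on Icc 0 1
          intro x hx
          rcases eq_or_lt_of_le hx.1 with h0 | h0
          · subst h0
            have hmap : Tendsto (fun t : ℝ => -t) (𝓝[Icc (0:ℝ) 1] 0) (𝓝[≤] (0:ℝ)) := by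
              apply tendsto_nhdsWithin_of_tendsto_nhds_of_eventually_within
              · have : Tendsto (fun t : ℝ => -t) (𝓝 (0:ℝ)) (𝓝 (-0)) :=
                  (continuous_neg.tendsto 0)
                simpa using this.mono_left nhdsWithin_le_nhds
              · filter_upwards [eventually_mem_nhdsWithin] with t ht
                exact neg_nonpos.mpr ht.1
            have h := (tendsto_FF_Iic m).comp hmap
            have hval : FF m (-0) = -H (m - 1) / m := by rw [neg_zero, FF_zero]
            rw [← hval] at h
            exact h
          · exact (((hasDerivAt_FF m hm1 (by linarith : -x < 0)).comp x
              (hasDerivAt_neg x)).continuousAt).continuousWithinAt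
        · -- derivative on Ioo 0 1
          intro x hx
          have h := ((hasDerivAt_FF m hm1 (by linarith [hx.1] : -x < 0)).comp x
            (hasDerivAt_neg x))
          refine h.congr_deriv ?_
          rw [neg_neg, sub_neg_eq_add]
          ring
        · -- nonneg
          intro x hx
          rw [neg_nonneg]
          exact div_nonpos_of_nonpos_of_nonneg
            (Real.log_nonpos (by linarith [hx.1]) (by linarith [hx.2]))
            (pow_nonneg (by linarith [hx.1]) _)
      exact IntegrableOn.congr_fun hpos.neg (fun x _ => by simp) measurableSet_Ioc
    · -- on Ioi 1
      apply integrableOn_Ioi_deriv_of_nonneg' (g := fun t : ℝ => -FF m (-t))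
        (l := -0)
      · intro x hx
        have hx1 : (1:ℝ) ≤ x := hx
        have h := ((hasDerivAt_FF m hm1 (by linarith : -x < 0)).comp x
          (hasDerivAt_neg x)).neg
        refine h.congr_deriv ?_
        rw [neg_neg, sub_neg_eq_add]
        ring
      · intro x hx
        have hx1 : (1:ℝ) < x := hx
        exact div_nonneg (Real.log_nonneg (by linarith)) (pow_nonneg (by linarith) _)
      · exact ((tendsto_FF_atBot m hm).comp tendsto_neg_atTop_atBot).neg
  have := (MeasurePreserving.integrableOn_comp_preimage
    (Measure.measurePreserving_neg (volume : Measure ℝ))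
    (Homeomorph.neg ℝ).measurableEmbedding).2 key
  have hpre : (Neg.neg : ℝ → ℝ) ⁻¹' (Ioi 0) = Iio 0 := by
    ext x; simp
  rw [hpre] at this
  apply this.congr_fun _ measurableSet_Iio
  intro x hx
  simp only [Function.comp_apply]
  ring_nf

/-- For every integer `n ≥ 3`, `∫_{-∞}^{0} log(−z) / (1−z)^n dz = −H(n−2) / (n−1)`. -/
theorem integral_log_neg_div_one_sub_pow (n : ℕ) (hn : 3 ≤ n) :
    (∫ z in Set.Iio (0 : ℝ), Real.log (-z) / (1 - z) ^ n) =
      -H (n - 2) / ((n : ℝ) - 1) := by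
  obtain ⟨m, rfl⟩ : ∃ m, n = m + 1 := ⟨n - 1, by omega⟩
  have hm : 2 ≤ m := by omega
  have hm1 : 1 ≤ m := by omega
  have hint : IntegrableOn (fun z : ℝ => Real.log (-z) / (1 - z) ^ (m + 1)) (Iio 0) :=
    integrableOn_f m hm
  have hid : Tendsto (fun x : ℝ => x) (𝓝[<] (0:ℝ)) (𝓝 0) :=
    tendsto_id.mono_left nhdsWithin_le_nhds
  have hcov : AECover ((volume : Measure ℝ).restrict (Iio (0:ℝ))) (𝓝[<] (0:ℝ))
      (fun x => Iic x) := aecover_Iio_of_Iic hid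
  have h1 := hcov.integral_tendsto_of_countably_generated hint
  have h1' : Tendsto (fun x : ℝ => ∫ z in Iic x, Real.log (-z) / (1 - z) ^ (m + 1))
      (𝓝[<] (0:ℝ)) (𝓝 (∫ z in Iio (0:ℝ), Real.log (-z) / (1 - z) ^ (m + 1))) := by
    apply h1.congr'
    filter_upwards [self_mem_nhdsWithin] with x (hx : x < 0)
    rw [Measure.restrict_restrict measurableSet_Iic,
      Set.inter_eq_self_of_subset_left (Set.Iic_subset_Iio.mpr hx)]
  have h2 : Tendsto (fun x : ℝ => ∫ z in Iic x, Real.log (-z) / (1 - z) ^ (m + 1))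
      (𝓝[<] (0:ℝ)) (𝓝 (-H (m - 1) / m)) := by
    have h3 : Tendsto (fun x : ℝ => FF m x - 0) (𝓝[<] (0:ℝ)) (𝓝 (-H (m - 1) / m)) := by
      simpa using (tendsto_FF_Iic m).mono_left
        (nhdsWithin_mono 0 Set.Iio_subset_Iic_self)
    apply h3.congr'
    filter_upwards [self_mem_nhdsWithin] with x (hx : x < 0)
    symm
    exact integral_Iic_of_hasDerivAt_of_tendsto'
      (fun z hz => hasDerivAt_FF m hm1 (lt_of_le_of_lt hz hx))
      (hint.mono_set fun z hz => lt_of_le_of_lt hz hx)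
      (tendsto_FF_atBot m hm)
  have hfinal := tendsto_nhds_unique h1' h2
  rw [hfinal]
  have : (m + 1 : ℕ) - 2 = m - 1 := by omega
  rw [this]
  congr 1
  push_cast
  ring
end
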